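/- For δ > 0 let h_δ : ℝ → ℝ be the trapezoid bump h_δ(t) = max(0, min(1, 2 − |t|/δ)), which equals 1 on [−δ, δ], equals 0 outside [−2δ, 2δ], and is linear on the two ramps. Let n ≥ 1 and f : [0,1]^n → ℝ be continuous. Then for every ε > 0 there exist δ > 0, a natural number L ≥ 1, and points a¹, …, a^L ∈ [0,1]^n such that ∫_{[0,1]^n} | f(x) − Σ_{l=1}^{L} f(a^l) · Π_{i=1}^{n} h_δ(xᵢ − a^l_i) | dx < ε. (The explicit trapezoid-product construction realizes the partially separable representation of any continuous function in the L¹ sense.) -/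

import Mathlib

open MeasureTheory

noncomputable def trapG (s : ℝ) : ℝ := max 0 (min 1 (2 - |s|))

lemma trapG_one {s : ℝ} (h : |s| ≤ 1) : trapG s = 1 := by
  unfold trapG
  rw [min_eq_left (by linarith), max_eq_right zero_le_one]

lemma trapG_zero {s : ℝ} (h : 2 ≤ |s|) : trapG s = 0 := by
  unfold trapG
  rw [max_eq_left (le_trans (min_le_right _ _) (by linarith))]

lemma trapG_pair {u : ℝ} (h1 : -2 ≤ u) (h2 : u ≤ 1) :
    trapG (u + 3) + trapG u = 1 := by
  rcases le_total u (-1) with hu | hu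
  · unfold trapG
    rw [abs_of_nonneg (by linarith : (0:ℝ) ≤ u + 3), abs_of_nonpos (by linarith : u ≤ 0)]
    rw [min_eq_right (by linarith), max_eq_right (by linarith),
        min_eq_right (by linarith), max_eq_right (by linarith)]
    ring
  · rw [trapG_zero (by rw [abs_of_nonneg (by linarith)]; linarith),
        trapG_one (abs_le.2 ⟨hu, h2⟩)]
    ring

lemma trapG_eq (δ u : ℝ) (hδ : 0 < δ) :
    max 0 (min 1 (2 - |u| / δ)) = trapG (u / δ) := by
  unfold trapG
  rw [abs_div, abs_of_pos hδ]

lemma trapG_sum (K : ℕ) : ∀ s : ℝ, 0 ≤ s → s ≤ 3 * K + 1 →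
    ∑ k : Fin (K + 1), trapG (s - 3 * k) = 1 := by
  induction K with
  | zero =>
    intro s h0 h1
    rw [Fin.sum_univ_one]
    have : ((0 : Fin 1) : ℝ) = 0 := by norm_num
    rw [this, mul_zero, sub_zero]
    norm_num at h1
    exact trapG_one (abs_le.2 ⟨by linarith, h1⟩)
  | succ K ih =>
    intro s h0 h1
    push_cast at h1
    rw [Fin.sum_univ_castSucc]
    have hcast2 : ((Fin.last (K+1) : Fin (K+2)) : ℝ) = (K : ℝ) + 1 := by
      rw [Fin.val_last]; push_cast; ring
    rcases le_total s (3 * K + 1) with hs | hs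
    · have hlast : trapG (s - 3 * ((Fin.last (K+1) : Fin (K+2)) : ℝ)) = 0 := by
        apply trapG_zero
        rw [hcast2, abs_of_nonpos (by linarith)]
        linarith
      rw [hlast, add_zero, ← ih s h0 hs]
      apply Finset.sum_congr rfl
      intro k _
      have : (((k.castSucc) : Fin (K+2)) : ℝ) = ((k : Fin (K+1)) : ℝ) := by
        simp [Fin.coe_castSucc]
      rw [this]
    · rw [Fin.sum_univ_castSucc]
      have hzero : ∀ k : Fin K, trapG (s - 3 * (((k.castSucc).castSucc : Fin (K+2)) : ℝ)) = 0 := by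
        intro k
        apply trapG_zero
        have hk : (k : ℝ) + 1 ≤ (K : ℝ) := by exact_mod_cast k.is_lt
        simp only [Fin.coe_castSucc]
        rw [abs_of_nonneg (by linarith)]
        linarith
      rw [Finset.sum_eq_zero (fun k _ => hzero k), zero_add]
      have hcast1 : (((Fin.last K).castSucc : Fin (K+2)) : ℝ) = (K : ℝ) := by
        simp [Fin.coe_castSucc, Fin.val_last]
      rw [hcast1, hcast2]
      have heq : s - 3 * (K : ℝ) = (s - 3 * ((K:ℝ) + 1)) + 3 := by ring
      rw [heq]
      exact trapG_pair (by linarith) (by linarith)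

/-- The explicit trapezoid-product construction realizes the partially separable
representation of any continuous function on the unit cube in the `L¹` sense:
with the trapezoid bump `h_δ(t) = max 0 (min 1 (2 - |t|/δ))`, the combination
`∑_l f(aˡ) ∏_i h_δ(xᵢ - aˡᵢ)` approximates `f` arbitrarily well. -/
theorem trapezoid_product_representation (n : ℕ) (hn : 1 ≤ n)
    (f : (Fin n → ℝ) → ℝ) (hf : ContinuousOn f (Set.Icc 0 1)) :
    ∀ ε > (0 : ℝ), ∃ δ > (0 : ℝ), ∃ L : ℕ, 1 ≤ L ∧
      ∃ a : Fin L → Fin n → ℝ,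
        (∀ l, a l ∈ Set.Icc (0 : Fin n → ℝ) 1) ∧
        (∫ x in Set.Icc (0 : Fin n → ℝ) 1,
            |f x - ∑ l, f (a l) * ∏ i, max 0 (min 1 (2 - |x i - a l i| / δ))|) < ε := by
  intro ε hε
  -- uniform continuity on the compact cube
  have hc : UniformContinuousOn f (Set.Icc 0 1) :=
    isCompact_Icc.uniformContinuousOn_of_continuous hf
  rw [Metric.uniformContinuousOn_iff] at hc
  obtain ⟨d, hd, hco⟩ := hc (ε / 2) (by linarith)
  obtain ⟨K, hK⟩ := exists_nat_gt (2 / d)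
  set δ : ℝ := 1 / (3 * K + 1) with hδdef
  have hKpos : (0:ℝ) < 3 * K + 1 := by positivity
  have hδpos : 0 < δ := by positivity
  have h2δ : 2 * δ < d := by
    rw [hδdef]
    rw [div_lt_iff₀ hd] at hK
    rw [mul_one_div, div_lt_iff₀ hKpos]
    nlinarith [hd, (by positivity : (0:ℝ) ≤ (K:ℝ))]
  set L : ℕ := (K + 1) ^ n with hL
  have hLpos : 1 ≤ L := Nat.one_le_iff_ne_zero.2 (by positivity)
  have hcard : Fintype.card (Fin n → Fin (K + 1)) = L := by simp [hL]
  set e : (Fin n → Fin (K + 1)) ≃ Fin L := Fintype.equivFinOfCardEq hcard with he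
  set a : Fin L → Fin n → ℝ := fun l i => 3 * δ * ((e.symm l i : ℕ) : ℝ) with ha
  have hmem : ∀ l, a l ∈ Set.Icc (0 : Fin n → ℝ) 1 := by
    intro l
    constructor
    · intro i
      simp only [ha, Pi.zero_apply]
      positivity
    · intro i
      simp only [ha, Pi.one_apply]
      have hk : ((e.symm l i : ℕ) : ℝ) ≤ K := by exact_mod_cast (e.symm l i).is_le
      rw [hδdef, mul_one_div, div_mul_eq_mul_div, div_le_one hKpos]
      nlinarith
  refine ⟨δ, hδpos, L, hLpos, a, hmem, ?_⟩
  have hδmul : (3 * (K:ℝ) + 1) * δ = 1 := by rw [hδdef]; field_simp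
  -- the 1d partition of unity
  have hpart1 : ∀ t : ℝ, 0 ≤ t → t ≤ 1 →
      ∑ k : Fin (K + 1), max 0 (min 1 (2 - |t - 3 * δ * ((k : ℕ) : ℝ)| / δ)) = 1 := by
    intro t h0 h1
    have hs := trapG_sum K (t / δ) (by positivity)
      (by rw [div_le_iff₀ hδpos]; linarith [hδmul])
    have hterm : ∀ k : Fin (K+1), max 0 (min 1 (2 - |t - 3 * δ * ((k : ℕ) : ℝ)| / δ))
        = trapG (t / δ - 3 * ((k : ℕ) : ℝ)) := by
      intro k
      rw [trapG_eq _ _ hδpos]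
      congr 2
      field_simp
    rw [Finset.sum_congr rfl (fun k _ => hterm k)]
    exact hs
  -- partition of unity in n dimensions
  have hpart : ∀ x ∈ Set.Icc (0 : Fin n → ℝ) 1,
      ∑ l : Fin L, ∏ i, max 0 (min 1 (2 - |x i - a l i| / δ)) = 1 := by
    intro x hx
    rw [← Equiv.sum_comp e (fun l => ∏ i, max 0 (min 1 (2 - |x i - a l i| / δ)))]
    have : ∀ v : Fin n → Fin (K+1), (∏ i, max 0 (min 1 (2 - |x i - a (e v) i| / δ)))
        = ∏ i, max 0 (min 1 (2 - |x i - 3 * δ * ((v i : ℕ) : ℝ)| / δ)) := by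
      intro v
      apply Finset.prod_congr rfl
      intro i _
      simp [ha]
    rw [Finset.sum_congr rfl (fun v _ => this v)]
    rw [← Fintype.prod_sum (fun (i : Fin n) (k : Fin (K+1)) =>
        max 0 (min 1 (2 - |x i - 3 * δ * ((k : ℕ) : ℝ)| / δ)))]
    rw [Finset.prod_eq_one]
    intro i _
    exact hpart1 (x i) (hx.1 i) (hx.2 i)
  -- the combination
  set S : (Fin n → ℝ) → ℝ :=
    fun x => ∑ l, f (a l) * ∏ i, max 0 (min 1 (2 - |x i - a l i| / δ)) with hS
  -- a nonzero trapezoid factor forces closeness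
  have hfac : ∀ u : ℝ, max 0 (min 1 (2 - |u| / δ)) ≠ 0 → |u| < 2 * δ := by
    intro u h
    by_contra hcon
    push_neg at hcon
    apply h
    rw [max_eq_left]
    refine le_trans (min_le_right _ _) ?_
    rw [sub_nonpos, le_div_iff₀ hδpos]
    linarith
  -- pointwise estimate
  have hpt : ∀ x ∈ Set.Icc (0 : Fin n → ℝ) 1, |f x - S x| ≤ ε / 2 := by
    intro x hx
    have hPnn : ∀ l : Fin L, 0 ≤ ∏ i, max 0 (min 1 (2 - |x i - a l i| / δ)) :=
      fun l => Finset.prod_nonneg (fun i _ => le_max_left _ _)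
    have hterm : ∀ l : Fin L,
        |f x - f (a l)| * (∏ i, max 0 (min 1 (2 - |x i - a l i| / δ)))
        ≤ (ε/2) * ∏ i, max 0 (min 1 (2 - |x i - a l i| / δ)) := by
      intro l
      rcases (hPnn l).eq_or_lt with hP | hP
      · rw [← hP, mul_zero, mul_zero]
      · refine mul_le_mul_of_nonneg_right ?_ (hPnn l)
        have hne : ∀ i, max 0 (min 1 (2 - |x i - a l i| / δ)) ≠ 0 := by
          intro i h0
          rw [Finset.prod_eq_zero (Finset.mem_univ i) h0] at hP
          exact lt_irrefl _ hP
        have hdist : dist x (a l) < d := by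
          rw [dist_pi_lt_iff hd]
          intro i
          rw [Real.dist_eq]
          exact lt_trans (hfac _ (hne i)) h2δ
        have := hco x hx (a l) (hmem l) hdist
        rw [Real.dist_eq] at this
        exact this.le
    have hdecomp : f x - S x
        = ∑ l, (f x - f (a l)) * ∏ i, max 0 (min 1 (2 - |x i - a l i| / δ)) := by
      have : ∑ l, (f x - f (a l)) * ∏ i, max 0 (min 1 (2 - |x i - a l i| / δ))
          = (∑ l, f x * ∏ i, max 0 (min 1 (2 - |x i - a l i| / δ))) - S x := by
        rw [hS, ← Finset.sum_sub_distrib]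
        exact Finset.sum_congr rfl (fun l _ => by rw [sub_mul])
      rw [this, ← Finset.mul_sum, hpart x hx, mul_one]
    calc |f x - S x|
        = |∑ l, (f x - f (a l)) * ∏ i, max 0 (min 1 (2 - |x i - a l i| / δ))| := by
          rw [hdecomp]
      _ ≤ ∑ l, |(f x - f (a l)) * ∏ i, max 0 (min 1 (2 - |x i - a l i| / δ))| :=
          Finset.abs_sum_le_sum_abs _ _
      _ = ∑ l, |f x - f (a l)| * ∏ i, max 0 (min 1 (2 - |x i - a l i| / δ)) :=
          Finset.sum_congr rfl (fun l _ => by rw [abs_mul, abs_of_nonneg (hPnn l)])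
      _ ≤ ∑ l, (ε/2) * ∏ i, max 0 (min 1 (2 - |x i - a l i| / δ)) :=
          Finset.sum_le_sum (fun l _ => hterm l)
      _ = (ε/2) * ∑ l, ∏ i, max 0 (min 1 (2 - |x i - a l i| / δ)) :=
          (Finset.mul_sum _ _ _).symm
      _ = ε/2 := by rw [hpart x hx, mul_one]
  -- continuity and integrability
  have hScont : Continuous S := by
    rw [hS]
    apply continuous_finset_sum
    intro l _
    apply continuous_const.mul
    apply continuous_finset_prod
    intro i _
    exact continuous_const.max (continuous_const.min
      (continuous_const.sub (by fun_prop)))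
  have hcont : ContinuousOn (fun x => |f x - S x|) (Set.Icc (0 : Fin n → ℝ) 1) :=
    (hf.sub hScont.continuousOn).abs
  have hint : IntegrableOn (fun x => |f x - S x|) (Set.Icc (0 : Fin n → ℝ) 1) volume :=
    hcont.integrableOn_compact isCompact_Icc
  have hvol : volume (Set.Icc (0 : Fin n → ℝ) 1) = 1 := by
    rw [Real.volume_Icc_pi]
    simp
  have hint2 : IntegrableOn (fun _ : Fin n → ℝ => ε/2) (Set.Icc (0 : Fin n → ℝ) 1) volume := by
    exact integrableOn_const (by rw [hvol]; exact ENNReal.one_ne_top)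
  calc (∫ x in Set.Icc (0 : Fin n → ℝ) 1, |f x - S x|)
      ≤ ∫ _x in Set.Icc (0 : Fin n → ℝ) 1, (ε/2 : ℝ) :=
        setIntegral_mono_on hint hint2 measurableSet_Icc hpt
    _ = (volume (Set.Icc (0 : Fin n → ℝ) 1)).toReal * (ε/2) := by
        rw [setIntegral_const]; rfl
    _ < ε := by rw [hvol]; simp; linarith
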